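/- Let E = ℝ^d with the Euclidean inner product, let g : E → ℝ be differentiable with L-Lipschitz gradient ∇g (L > 0), let f : E → ℝ, let F : E × E → ℝ be a jointly continuous tangent majorant of f, let 0 < τ < 1/L, set h = f + g and H(x, x̃) = F(x, x̃) + g(x̃) + ⟨x − x̃, ∇g(x̃)⟩ + (1/(2τ))‖x − x̃‖², and assume h is bounded from below. Let (x^(n)) be a sequence in E such that for every n, x^(n+1) is a global minimizer of z ↦ H(z, x^(n)). Then every cluster point x* of (x^(n)) (i.e., every limit of a convergent subsequence) is a fixed point of the iteration: x* is a global minimizer of z ↦ H(z, x*), that is, H(y, x*) ≥ H(x*, x*) = h(x*) for every y ∈ E. -/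

import Mathlib

open scoped RealInnerProductSpace
open Filter Topology

lemma descent_lemma {d : ℕ} (g : EuclideanSpace ℝ (Fin d) → ℝ) (L : ℝ)
    (hg : Differentiable ℝ g)
    (hlip : ∀ a b : EuclideanSpace ℝ (Fin d),
      ‖gradient g a - gradient g b‖ ≤ L * ‖a - b‖)
    (a b : EuclideanSpace ℝ (Fin d)) :
    g b ≤ g a + ⟪b - a, gradient g a⟫ + L / 2 * ‖b - a‖ ^ 2 := by
  rw [real_inner_comm]
  set v := b - a with hv
  set c : ℝ → EuclideanSpace ℝ (Fin d) := fun t => a + t • v with hc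
  have hcderiv : ∀ t : ℝ, HasDerivAt c v t := by
    intro t
    have h1 : HasDerivAt (fun t : ℝ => t • v) ((1:ℝ) • v) t :=
      (hasDerivAt_id t).smul_const v
    simpa only [one_smul] using h1.const_add a
  set φ : ℝ → ℝ := fun t => g (c t) - t * ⟪gradient g a, v⟫ - L / 2 * t ^ 2 * ‖v‖ ^ 2 with hφ
  have hφderiv : ∀ t : ℝ, HasDerivAt φ
      (⟪gradient g (c t), v⟫ - ⟪gradient g a, v⟫ - L * t * ‖v‖ ^ 2) t := by
    intro t
    have h1 : HasDerivAt (fun t => g (c t)) (⟪gradient g (c t), v⟫) t := by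
      have := ((hg (c t)).hasGradientAt.hasFDerivAt).comp_hasDerivAt t (hcderiv t)
      simp only [Function.comp_def] at this
      simpa using this
    have h2 : HasDerivAt (fun t : ℝ => t * ⟪gradient g a, v⟫) (⟪gradient g a, v⟫) t := by
      simpa using (hasDerivAt_id t).mul_const (⟪gradient g a, v⟫)
    have h3 : HasDerivAt (fun t : ℝ => L / 2 * t ^ 2 * ‖v‖ ^ 2) (L * t * ‖v‖ ^ 2) t := by
      have : HasDerivAt (fun t : ℝ => t ^ 2) (2 * t) t := by
        simpa using hasDerivAt_pow 2 t
      have := (this.const_mul (L / 2)).mul_const (‖v‖ ^ 2)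
      rw [show L * t * ‖v‖ ^ 2 = L / 2 * (2 * t) * ‖v‖ ^ 2 by ring]
      exact this
    exact (h1.sub h2).sub h3
  have hmono : AntitoneOn φ (Set.Icc (0:ℝ) 1) := by
    apply antitoneOn_of_deriv_nonpos (convex_Icc 0 1)
    · exact fun t _ => ((hφderiv t).differentiableAt).continuousAt.continuousWithinAt
    · exact fun t _ => ((hφderiv t).differentiableAt).differentiableWithinAt
    · intro t ht
      rw [interior_Icc] at ht
      rw [(hφderiv t).deriv]
      have hba : ⟪gradient g (c t) - gradient g a, v⟫ ≤ ‖gradient g (c t) - gradient g a‖ * ‖v‖ :=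
        real_inner_le_norm _ _
      have hct : ‖gradient g (c t) - gradient g a‖ ≤ L * (t * ‖v‖) := by
        have h4 : c t - a = t • v := by simp [hc]
        have := hlip (c t) a
        rwa [h4, norm_smul, Real.norm_eq_abs, abs_of_pos ht.1] at this
      have this : ⟪gradient g (c t), v⟫ - ⟪gradient g a, v⟫ ≤ L * (t * ‖v‖) * ‖v‖ := by
        rw [← inner_sub_left]
        calc ⟪gradient g (c t) - gradient g a, v⟫ ≤ ‖gradient g (c t) - gradient g a‖ * ‖v‖ := hba
          _ ≤ L * (t * ‖v‖) * ‖v‖ := mul_le_mul_of_nonneg_right hct (norm_nonneg _)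
      nlinarith [norm_nonneg v]
  have key := hmono (Set.mem_Icc.mpr ⟨le_refl 0, zero_le_one⟩)
      (Set.mem_Icc.mpr ⟨zero_le_one, le_refl 1⟩) zero_le_one
  have hc0 : c 0 = a := by simp [hc]
  have hc1 : c 1 = b := by simp [hc, hv]
  simp only [hφ, hc0, hc1, one_mul, one_pow, mul_one, zero_mul, sub_zero,
    zero_pow, mul_zero] at key
  linarith

/-- Every cluster point `x*` of the majorized forward-backward iterates is a fixed
point of the iteration: `x*` is a global minimizer of `z ↦ H (z, x*)`, i.e.
`H (y, x*) ≥ H (x*, x*) = h x*` for all `y`. -/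
theorem majorized_fb_cluster_points_are_fixed {d : ℕ}
    (g f : EuclideanSpace ℝ (Fin d) → ℝ)
    (F : EuclideanSpace ℝ (Fin d) × EuclideanSpace ℝ (Fin d) → ℝ)
    (L τ : ℝ) (hL : 0 < L)
    (hg : Differentiable ℝ g)
    (hlip : ∀ a b : EuclideanSpace ℝ (Fin d),
      ‖gradient g a - gradient g b‖ ≤ L * ‖a - b‖)
    (hFcont : Continuous F)
    (hmaj : ∀ x xt : EuclideanSpace ℝ (Fin d), f x ≤ F (x, xt))
    (hdiag : ∀ x : EuclideanSpace ℝ (Fin d), F (x, x) = f x)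
    (hτ0 : 0 < τ) (hτ : τ < 1 / L)
    (hbdd : BddBelow (Set.range fun z : EuclideanSpace ℝ (Fin d) => f z + g z))
    (x : ℕ → EuclideanSpace ℝ (Fin d))
    (hiter : ∀ n : ℕ, ∀ z : EuclideanSpace ℝ (Fin d),
      F (x (n + 1), x n) + g (x n) + ⟪x (n + 1) - x n, gradient g (x n)⟫ +
          (1 / (2 * τ)) * ‖x (n + 1) - x n‖ ^ 2
        ≤ F (z, x n) + g (x n) + ⟪z - x n, gradient g (x n)⟫ +
          (1 / (2 * τ)) * ‖z - x n‖ ^ 2)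
    (xstar : EuclideanSpace ℝ (Fin d))
    (hcluster : ∃ φ : ℕ → ℕ, StrictMono φ ∧
      Filter.Tendsto (fun k : ℕ => x (φ k)) Filter.atTop (nhds xstar)) :
    (∀ y : EuclideanSpace ℝ (Fin d),
      F (xstar, xstar) + g xstar + ⟪xstar - xstar, gradient g xstar⟫ +
          (1 / (2 * τ)) * ‖xstar - xstar‖ ^ 2
        ≤ F (y, xstar) + g xstar + ⟪y - xstar, gradient g xstar⟫ +
          (1 / (2 * τ)) * ‖y - xstar‖ ^ 2) ∧
    F (xstar, xstar) + g xstar + ⟪xstar - xstar, gradient g xstar⟫ +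
        (1 / (2 * τ)) * ‖xstar - xstar‖ ^ 2
      = f xstar + g xstar := by
  obtain ⟨φ, hφmono, hφlim⟩ := hcluster
  -- continuity of the gradient
  have hGcont : Continuous (gradient g) := by
    have : LipschitzWith (Real.toNNReal L) (gradient g) := by
      apply LipschitzWith.of_dist_le_mul
      intro a b
      rw [dist_eq_norm, dist_eq_norm]
      calc ‖gradient g a - gradient g b‖ ≤ L * ‖a - b‖ := hlip a b
        _ ≤ (Real.toNNReal L) * ‖a - b‖ := by
            apply mul_le_mul_of_nonneg_right _ (norm_nonneg _)
            exact le_of_eq (Real.coe_toNNReal L hL.le).symm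
    exact this.continuous
  -- positive constant
  have hτL : τ * L < 1 := (lt_div_iff₀ hL).mp hτ
  have hckey : 1 / (2 * τ) - L / 2 = (1 - τ * L) / (2 * τ) := by
    field_simp
  have hc : 0 < 1 / (2 * τ) - L / 2 := by
    rw [hckey]; exact div_pos (by linarith) (by linarith)
  -- sufficient decrease
  set a : ℕ → ℝ := fun n => f (x n) + g (x n) with ha
  have hdec : ∀ n : ℕ,
      a (n + 1) + (1 / (2 * τ) - L / 2) * ‖x (n + 1) - x n‖ ^ 2 ≤ a n := by
    intro n
    have h1 := hiter n (x n)
    simp only [sub_self, inner_zero_left, norm_zero, hdiag, zero_pow, mul_zero,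
      add_zero, ne_eq, OfNat.ofNat_ne_zero, not_false_eq_true] at h1
    have h2 := descent_lemma g L hg hlip (x n) (x (n + 1))
    have h3 := hmaj (x (n + 1)) (x n)
    simp only [ha]
    nlinarith [h1, h2, h3]
  have haAnti : Antitone a := by
    apply antitone_nat_of_succ_le
    intro n
    have h1 := hdec n
    have h2 : 0 ≤ (1 / (2 * τ) - L / 2) * ‖x (n + 1) - x n‖ ^ 2 :=
      mul_nonneg hc.le (sq_nonneg _)
    exact le_trans (le_add_of_nonneg_right h2) h1
  have hbdd' : BddBelow (Set.range a) := by
    obtain ⟨m, hm⟩ := hbdd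
    exact ⟨m, by rintro y ⟨n, rfl⟩; exact hm ⟨x n, rfl⟩⟩
  have halim : Tendsto a atTop (𝓝 (⨅ n, a n)) := tendsto_atTop_ciInf haAnti hbdd'
  have halim' : Tendsto (fun n => a (n + 1)) atTop (𝓝 (⨅ n, a n)) :=
    halim.comp (tendsto_add_atTop_nat 1)
  have hdiff : Tendsto (fun n => a n - a (n + 1)) atTop (𝓝 0) := by
    simpa using halim.sub halim'
  have hsq : Tendsto (fun n => ‖x (n + 1) - x n‖ ^ 2) atTop (𝓝 0) := by
    apply squeeze_zero (fun n => by positivity)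
      (g := fun n => (a n - a (n + 1)) / (1 / (2 * τ) - L / 2))
    · intro n
      rw [le_div_iff₀ hc]
      nlinarith [hdec n]
    · simpa using hdiff.div_const _
  have hnorm : Tendsto (fun n => ‖x (n + 1) - x n‖) atTop (𝓝 0) := by
    have h := (Real.continuous_sqrt.tendsto 0).comp hsq
    have heq : ((fun t => Real.sqrt t) ∘ fun n => ‖x (n + 1) - x n‖ ^ 2)
        = fun n => ‖x (n + 1) - x n‖ :=
      funext fun n => Real.sqrt_sq (norm_nonneg _)
    rw [heq] at h
    simpa using h
  have hΔ : Tendsto (fun n => x (n + 1) - x n) atTop (𝓝 0) :=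
    tendsto_zero_iff_norm_tendsto_zero.mpr hnorm
  have hphi : Tendsto φ atTop atTop := hφmono.tendsto_atTop
  have hΔφ : Tendsto (fun k => x (φ k + 1) - x (φ k)) atTop (𝓝 0) := hΔ.comp hphi
  have hx1 : Tendsto (fun k => x (φ k + 1)) atTop (𝓝 xstar) := by
    have := hΔφ.add hφlim
    simpa using this
  have hGφ : Tendsto (fun k => gradient g (x (φ k))) atTop (𝓝 (gradient g xstar)) :=
    (hGcont.tendsto xstar).comp hφlim
  constructor
  · intro y
    have hA : Tendsto (fun k =>
        F (x (φ k + 1), x (φ k)) + g (x (φ k)) +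
          ⟪x (φ k + 1) - x (φ k), gradient g (x (φ k))⟫ +
          (1 / (2 * τ)) * ‖x (φ k + 1) - x (φ k)‖ ^ 2) atTop
        (𝓝 (F (xstar, xstar) + g xstar + 0 + 0)) := by
      refine (Tendsto.add (Tendsto.add ?_ ?_) ?_).add ?_
      · exact (hFcont.tendsto (xstar, xstar)).comp (hx1.prodMk_nhds hφlim)
      · exact (hg.continuous.tendsto xstar).comp hφlim
      · have := Filter.Tendsto.inner (𝕜 := ℝ) hΔφ hGφ
        simpa using this
      · have := (hsq.comp hphi).const_mul (1 / (2 * τ))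
        simpa using this
    have hB : Tendsto (fun k =>
        F (y, x (φ k)) + g (x (φ k)) + ⟪y - x (φ k), gradient g (x (φ k))⟫ +
          (1 / (2 * τ)) * ‖y - x (φ k)‖ ^ 2) atTop
        (𝓝 (F (y, xstar) + g xstar + ⟪y - xstar, gradient g xstar⟫ +
          (1 / (2 * τ)) * ‖y - xstar‖ ^ 2)) := by
      refine (Tendsto.add (Tendsto.add ?_ ?_) ?_).add ?_
      · exact (hFcont.tendsto (y, xstar)).comp (tendsto_const_nhds.prodMk_nhds hφlim)
      · exact (hg.continuous.tendsto xstar).comp hφlim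
      · exact Filter.Tendsto.inner (𝕜 := ℝ) (tendsto_const_nhds.sub hφlim) hGφ
      · exact (((tendsto_const_nhds.sub hφlim).norm.pow 2).const_mul _)
    have key := le_of_tendsto_of_tendsto' hA hB (fun k => hiter (φ k) y)
    simpa using key
  · simp [hdiag]
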